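/- Under the assumption R₀ := νβ_Eν_E/(δ_F(ν_E+δ_E)) > 1, the uncontrolled reduced system F' = g(F, M_s) - δ_F F, M_s' = -δ_s M_s has exactly two equilibria in [0,∞)×[0,∞): the extinction equilibrium (0,0) and the persistence equilibrium (F̄, 0) with F̄ = (νν_E k/δ_F)(1 - 1/R₀). That is, g(F, 0) = δ_F F holds for F ≥ 0 exactly when F = 0 or F = F̄. -/

import Mathlib

noncomputable def gfun (bE nE dE dM gs k nu : ℝ) (F Ms : ℝ) : ℝ :=
  if 0 < F then
    nu * (1 - nu) * bE ^ 2 * nE ^ 2 * F ^ 2 /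
      ((bE * F / k + nE + dE) *
        ((1 - nu) * nE * bE * F + (bE * F / k + nE + dE) * dM * gs * Ms))
  else 0

theorem stmt_3 (bE nE dE dM dF ds gs k nu : ℝ)
    (hbE : 0 < bE) (hnE : 0 < nE) (hdE : 0 < dE) (hdM : 0 < dM)
    (hdF : 0 < dF) (hds : 0 < ds) (hgs : 0 < gs) (hk : 0 < k)
    (hnu : nu ∈ Set.Ioo (0:ℝ) 1)
    (hR0 : 1 < nu * bE * nE / (dF * (nE + dE))) :
    ∀ F Ms : ℝ, 0 ≤ F → 0 ≤ Ms →
      ((gfun bE nE dE dM gs k nu F Ms - dF * F = 0 ∧ -ds * Ms = 0) ↔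
        ((F, Ms) = ((0:ℝ), (0:ℝ)) ∨
          (F, Ms) = (nu * nE * k / dF * (1 - 1 / (nu * bE * nE / (dF * (nE + dE)))), (0:ℝ)))) := by
  obtain ⟨hnu0, hnu1⟩ := hnu
  have h1nu : 0 < 1 - nu := by linarith
  have hned : 0 < nE + dE := by linarith
  have hkey : dF * (nE + dE) < nu * bE * nE := by
    have := (one_lt_div (by positivity : (0:ℝ) < dF * (nE + dE))).mp hR0
    linarith
  have hFb_eq : nu * nE * k / dF * (1 - 1 / (nu * bE * nE / (dF * (nE + dE)))) =
      (nu * bE * nE * k - dF * (nE + dE) * k) / (dF * bE) := by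
    have hnbn : nu * bE * nE ≠ 0 := by positivity
    field_simp
  have hFb_pos : 0 < nu * nE * k / dF * (1 - 1 / (nu * bE * nE / (dF * (nE + dE)))) := by
    rw [hFb_eq]
    have : 0 < nu * bE * nE * k - dF * (nE + dE) * k := by nlinarith
    positivity
  intro F Ms hF hMs
  have hα : 0 < bE * F / k + nE + dE := by positivity
  constructor
  · rintro ⟨h1, h2⟩
    have hMs0 : Ms = 0 := by
      rcases mul_eq_zero.mp (by linarith : ds * Ms = 0) with h | h
      · exact absurd h (ne_of_gt hds)
      · exact h
    subst hMs0
    rcases eq_or_lt_of_le hF with h0 | h0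
    · left; rw [← h0]
    · right
      unfold gfun at h1
      rw [if_pos h0] at h1
      simp only [mul_zero, add_zero] at h1
      have hdpos : 0 < (bE * F / k + nE + dE) * ((1 - nu) * nE * bE * F) := by
        have : 0 < (1 - nu) * nE * bE * F :=
          mul_pos (mul_pos (mul_pos h1nu hnE) hbE) h0
        exact mul_pos hα this
      rw [sub_eq_zero, div_eq_iff (ne_of_gt hdpos)] at h1
      have hd : ((1 - nu) * nE * bE * F ^ 2) *
          (nu * bE * nE * k - dF * (bE * F + (nE + dE) * k)) = 0 := by
        have hkne : (k:ℝ) ≠ 0 := ne_of_gt hk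
        field_simp at h1
        linear_combination ((1 - nu) * nE * bE * F ^ 2) * h1
      have hfac : ((1 - nu) * nE * bE * F ^ 2) ≠ 0 := by positivity
      have hd2 : nu * bE * nE * k - dF * (bE * F + (nE + dE) * k) = 0 :=
        (mul_eq_zero.mp hd).resolve_left hfac
      have hFeq : F = nu * nE * k / dF * (1 - 1 / (nu * bE * nE / (dF * (nE + dE)))) := by
        rw [hFb_eq, eq_div_iff (by positivity : dF * bE ≠ 0)]
        linear_combination -hd2
      rw [hFeq]
  · rintro (h | h) <;> rw [Prod.ext_iff] at h <;> obtain ⟨hF1, hM1⟩ := h <;>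
      subst hF1 <;> subst hM1
    · exact ⟨by simp [gfun], by ring⟩
    · refine ⟨?_, by ring⟩
      unfold gfun
      rw [if_pos hFb_pos, hFb_eq]
      set Fb := (nu * bE * nE * k - dF * (nE + dE) * k) / (dF * bE) with hFbdef
      have hFbpos : 0 < Fb := by rw [← hFb_eq]; exact hFb_pos
      have hden : (bE * Fb / k + nE + dE) *
          ((1 - nu) * nE * bE * Fb + (bE * Fb / k + nE + dE) * dM * gs * 0) ≠ 0 := by
        simp only [mul_zero, add_zero]
        have h1 : 0 < bE * Fb / k + nE + dE := by positivity
        have h2 : 0 < (1 - nu) * nE * bE * Fb :=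
          mul_pos (mul_pos (mul_pos h1nu hnE) hbE) hFbpos
        exact ne_of_gt (mul_pos h1 h2)
      rw [sub_eq_zero, div_eq_iff hden, hFbdef]
      have hkne : (k:ℝ) ≠ 0 := ne_of_gt hk
      have hdfbe : dF * bE ≠ 0 := by positivity
      field_simp
      ring
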